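/- Let M = {closedBall(cᵢ, rᵢ)}ᵢ₌₁ᵐ be closed balls in ℝᵈ with positive radii, and let AABB(M_λ) be the minimal axis-aligned bounding box of ⋂ᵢ closedBall(cᵢ, λrᵢ) for λ ≥ μ_M (the Čech scale), assuming not all centers are equal. Then AABB(M_λ) degenerates to a single point if and only if λ = μ_M. -/

import Mathlib

open Metric EuclideanSpace

lemma coord_abs_le_dist {d : ℕ} (x y : EuclideanSpace ℝ (Fin d)) (i : Fin d) :
    |x i - y i| ≤ dist x y := by
  rw [EuclideanSpace.dist_eq]
  have h1 : |x i - y i| = Real.sqrt ((x i - y i) ^ 2) := by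
    rw [Real.sqrt_sq_eq_abs]
  rw [h1]
  apply Real.sqrt_le_sqrt
  have := Finset.single_le_sum (f := fun j => dist (x j) (y j) ^ 2)
    (fun j _ => sq_nonneg _) (Finset.mem_univ i)
  simpa [Real.dist_eq] using this

/-- For `λ ≥ μ_M`, the minimal axis-aligned bounding box of the intersection of the
rescaled balls degenerates to a single point if and only if `λ = μ_M`. -/
theorem stmt_18 {d m : ℕ} (c : Fin m → EuclideanSpace ℝ (Fin d)) (r : Fin m → ℝ)
    (hr : ∀ i, 0 < r i) (hc : ∃ i j, c i ≠ c j)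
    (μ : ℝ) (hμ : μ = sInf {lam : ℝ | 0 ≤ lam ∧
      (⋂ i, closedBall (c i) (lam * r i)).Nonempty}) :
    ∀ lam : ℝ, μ ≤ lam →
      ((∀ i : Fin d,
          sInf ((fun x => x i) '' ⋂ j, closedBall (c j) (lam * r j)) =
            sSup ((fun x => x i) '' ⋂ j, closedBall (c j) (lam * r j))) ↔
        lam = μ) := by
  classical
  obtain ⟨i₀, j₀, hij⟩ := hc
  have hm : (Finset.univ : Finset (Fin m)).Nonempty := ⟨i₀, Finset.mem_univ _⟩
  -- d > 0
  have hd : 0 < d := by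
    rcases Nat.eq_zero_or_pos d with h | h
    · exfalso; apply hij; subst h
      ext k; exact absurd k.2 (by omega)
    · exact h
  -- the max function
  set f : EuclideanSpace ℝ (Fin d) → ℝ :=
    fun x => Finset.univ.sup' hm (fun i => dist x (c i) / r i) with hf
  have hfc : Continuous f :=
    Continuous.finset_sup'_apply hm (fun i _ =>
      (Continuous.dist continuous_id continuous_const).div_const _)
  -- f is coercive
  have hcoer : Filter.Tendsto f (Filter.cocompact _) Filter.atTop := by
    apply Filter.tendsto_atTop_mono
      (fun x => Finset.le_sup' (b := i₀) (fun i => dist x (c i) / r i) (Finset.mem_univ i₀))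
    exact (tendsto_dist_right_cocompact_atTop (c i₀)).atTop_div_const (hr i₀)
  obtain ⟨x₀, hx₀⟩ := hfc.exists_forall_le hcoer
  -- basic facts about f
  have hfle : ∀ x i, dist x (c i) ≤ f x * r i := by
    intro x i
    have := Finset.le_sup' (b := i) (fun i => dist x (c i) / r i) (Finset.mem_univ i)
    calc dist x (c i) = dist x (c i) / r i * r i := (div_mul_cancel₀ _ (hr i).ne').symm
      _ ≤ f x * r i := mul_le_mul_of_nonneg_right this (hr i).le
  have hfmem : ∀ x lam, (∀ i, dist x (c i) ≤ lam * r i) → f x ≤ lam := by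
    intro x lam h
    apply Finset.sup'_le
    intro i _
    rw [div_le_iff₀ (hr i)]
    exact h i
  have hf0 : 0 ≤ f x₀ := by
    have h1 : (0:ℝ) ≤ dist x₀ (c i₀) / r i₀ := div_nonneg dist_nonneg (hr i₀).le
    exact le_trans h1 (Finset.le_sup' (fun i => dist x₀ (c i) / r i) (Finset.mem_univ i₀))
  -- μ = f x₀
  have hmemS : f x₀ ∈ {lam : ℝ | 0 ≤ lam ∧
      (⋂ i, closedBall (c i) (lam * r i)).Nonempty} := ⟨hf0, x₀, by
    simp only [Set.mem_iInter, mem_closedBall]; exact fun i => hfle x₀ i⟩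
  have hμx : μ = f x₀ := by
    rw [hμ]
    apply le_antisymm
    · exact csInf_le ⟨0, fun y hy => hy.1⟩ hmemS
    · apply le_csInf ⟨f x₀, hmemS⟩
      rintro b ⟨hb0, x, hx⟩
      simp only [Set.mem_iInter, mem_closedBall] at hx
      exact le_trans (hx₀ x) (hfmem x b hx)
  -- μ > 0
  have hμpos : 0 < μ := by
    rcases lt_or_eq_of_le (hμx ▸ hf0 : (0:ℝ) ≤ μ) with h | h
    · exact h
    exfalso
    apply hij
    have hall : ∀ i, c i = x₀ := by
      intro i
      have h2 := hfle x₀ i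
      rw [← hμx, ← h, zero_mul] at h2
      have h3 : dist x₀ (c i) = 0 := le_antisymm h2 dist_nonneg
      exact (eq_of_dist_eq_zero h3).symm
    rw [hall i₀, hall j₀]
  -- x₀ in the μ-intersection
  have hx₀mem : x₀ ∈ ⋂ i, closedBall (c i) (μ * r i) := by
    simp only [Set.mem_iInter, mem_closedBall]
    intro i; rw [hμx]; exact hfle x₀ i
  intro lam hlam
  constructor
  · -- degenerate box → lam = μ
    intro h
    by_contra hne
    have hlt : μ < lam := lt_of_le_of_ne hlam (Ne.symm hne)
    -- pick a coordinate
    set i : Fin d := ⟨0, hd⟩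
    set ε : ℝ := (lam - μ) * Finset.univ.inf' hm r with hε
    have hεpos : 0 < ε := by
      apply mul_pos (by linarith)
      apply (Finset.lt_inf'_iff hm).mpr
      intro j _; exact hr j
    have hεle : ∀ j, ε ≤ (lam - μ) * r j := by
      intro j
      apply mul_le_mul_of_nonneg_left _ (by linarith : (0:ℝ) ≤ lam - μ)
      exact Finset.inf'_le _ (Finset.mem_univ j)
    -- points x₀ ± ε e_i are in the intersection
    have hpm : ∀ t : ℝ, |t| ≤ ε →
        x₀ + EuclideanSpace.single i t ∈ ⋂ j, closedBall (c j) (lam * r j) := by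
      intro t ht
      simp only [Set.mem_iInter, mem_closedBall]
      intro j
      calc dist (x₀ + EuclideanSpace.single i t) (c j)
          ≤ dist (x₀ + EuclideanSpace.single i t) x₀ + dist x₀ (c j) := dist_triangle _ _ _
        _ ≤ ε + μ * r j := by
            apply add_le_add
            · rw [dist_eq_norm]
              simpa [EuclideanSpace.norm_single] using ht
            · rw [hμx]; exact hfle x₀ j
        _ ≤ lam * r j := by have := hεle j; linarith
    have hmem₁ := hpm ε (by rw [abs_of_pos hεpos])
    have hmem₂ := hpm (-ε) (by rw [abs_neg, abs_of_pos hεpos])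
    -- boundedness of the projection
    have hbdd : ∀ y ∈ (fun x : EuclideanSpace ℝ (Fin d) => x i) ''
        ⋂ j, closedBall (c j) (lam * r j), c i₀ i - lam * r i₀ ≤ y ∧ y ≤ c i₀ i + lam * r i₀ := by
      rintro y ⟨x, hx, rfl⟩
      simp only [Set.mem_iInter, mem_closedBall] at hx
      have := coord_abs_le_dist x (c i₀) i
      have h2 := (this.trans (hx i₀))
      rw [abs_le] at h2
      constructor <;> linarith [h2.1, h2.2]
    have hBa : BddAbove ((fun x : EuclideanSpace ℝ (Fin d) => x i) ''
        ⋂ j, closedBall (c j) (lam * r j)) := ⟨_, fun y hy => (hbdd y hy).2⟩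
    have hBb : BddBelow ((fun x : EuclideanSpace ℝ (Fin d) => x i) ''
        ⋂ j, closedBall (c j) (lam * r j)) := ⟨_, fun y hy => (hbdd y hy).1⟩
    have key := h i
    have h1 : sInf ((fun x : EuclideanSpace ℝ (Fin d) => x i) ''
        ⋂ j, closedBall (c j) (lam * r j)) ≤ x₀ i - ε := by
      apply csInf_le hBb
      refine ⟨_, hmem₂, ?_⟩
      show (x₀ + EuclideanSpace.single i (-ε)) i = x₀ i - ε
      simp [PiLp.add_apply, EuclideanSpace.single_apply]
      ring
    have h2 : x₀ i + ε ≤ sSup ((fun x : EuclideanSpace ℝ (Fin d) => x i) ''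
        ⋂ j, closedBall (c j) (lam * r j)) := by
      apply le_csSup hBa
      refine ⟨_, hmem₁, ?_⟩
      show (x₀ + EuclideanSpace.single i ε) i = x₀ i + ε
      simp [PiLp.add_apply, EuclideanSpace.single_apply]
    linarith
  · -- lam = μ → degenerate box
    rintro rfl
    -- intersection is a subsingleton
    have hsub : (⋂ j, closedBall (c j) (lam * r j)).Subsingleton := by
      intro x hx y hy
      by_contra hxy
      simp only [Set.mem_iInter, mem_closedBall] at hx hy
      set z := midpoint ℝ x y with hz
      have hzlt : ∀ j, dist z (c j) < lam * r j := by
        intro j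
        have hint := (strictConvex_closedBall ℝ (c j) (lam * r j)) (mem_closedBall.mpr (hx j))
          (mem_closedBall.mpr (hy j)) hxy (by norm_num : (0:ℝ) < 1/2) (by norm_num : (0:ℝ) < 1/2)
          (by norm_num)
        rw [interior_closedBall _ (mul_pos hμpos (hr j)).ne'] at hint
        have hzeq : z = (1/2 : ℝ) • x + (1/2 : ℝ) • y := by
          rw [hz, midpoint_eq_smul_add]; norm_num
        rw [hzeq]
        exact mem_ball.mp hint
      have : f z < lam := by
        apply (Finset.sup'_lt_iff hm).mpr
        intro j _
        rw [div_lt_iff₀ (hr j)]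
        exact hzlt j
      have := lt_of_le_of_lt (hμx ▸ hx₀ z) this
      exact absurd rfl (ne_of_lt this)
    have heq : (⋂ j, closedBall (c j) (lam * r j)) = {x₀} :=
      hsub.eq_singleton_of_mem hx₀mem
    intro i
    rw [heq]
    simp
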